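/- Let R be any SEP instance with minimum density k and minimum boundary density k_B. Then k/4 ≤ k_B ≤ k, and hence k ≤ 4·k_B (so minimizing the boundary density is a 4-approximation for SEP). -/

import Mathlib

/-- One of the four axis-aligned escape directions. -/
inductive Dir | left | right | up | down
deriving DecidableEq

instance : Fintype Dir :=
  ⟨{Dir.left, Dir.right, Dir.up, Dir.down}, fun x => by cases x <;> simp⟩

/-- `q` is a point of the grid `{1,…,N} × {1,…,N}`. -/
def inGrid (N : ℕ) (q : ℕ × ℕ) : Prop := 1 ≤ q.1 ∧ q.1 ≤ N ∧ 1 ≤ q.2 ∧ q.2 ≤ N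

/-- `q` is a boundary grid point: a grid point with some coordinate equal to `1` or `N`. -/
def onBoundary (N : ℕ) (q : ℕ × ℕ) : Prop :=
  inGrid N q ∧ (q.1 = 1 ∨ q.1 = N ∨ q.2 = 1 ∨ q.2 = N)

/-- The escape path of a grid point in a given direction. -/
def sepPath (N : ℕ) (p : ℕ × ℕ) : Dir → Set (ℕ × ℕ)
  | Dir.right => {q | q.2 = p.2 ∧ p.1 ≤ q.1 ∧ q.1 ≤ N}
  | Dir.left  => {q | q.2 = p.2 ∧ 1 ≤ q.1 ∧ q.1 ≤ p.1}
  | Dir.up    => {q | q.1 = p.1 ∧ p.2 ≤ q.2 ∧ q.2 ≤ N}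
  | Dir.down  => {q | q.1 = p.1 ∧ 1 ≤ q.2 ∧ q.2 ≤ p.2}

/-- The endpoint of the escape path of a grid point in a given direction. -/
def sepEnd (N : ℕ) (p : ℕ × ℕ) : Dir → ℕ × ℕ
  | Dir.right => (N, p.2)
  | Dir.left  => (1, p.2)
  | Dir.up    => (p.1, N)
  | Dir.down  => (p.1, 1)

/-- Density at grid point `q` of the escape assignment `σ` for the family of points `R`. -/
noncomputable def sepDensity {n : ℕ} (N : ℕ) (R : Fin n → ℕ × ℕ) (σ : Fin n → Dir)
    (q : ℕ × ℕ) : ℕ :=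
  {i | q ∈ sepPath N (R i) (σ i)}.ncard

/-- The minimum density `k` over all escape assignments. -/
noncomputable def sepOpt {n : ℕ} (N : ℕ) (R : Fin n → ℕ × ℕ) : ℕ :=
  sInf {k | ∃ σ : Fin n → Dir, ∀ q, inGrid N q → sepDensity N R σ q ≤ k}

/-- The minimum boundary density `k_B` over all escape assignments. -/
noncomputable def sepOptB {n : ℕ} (N : ℕ) (R : Fin n → ℕ × ℕ) : ℕ :=
  sInf {k | ∃ σ : Fin n → Dir, ∀ q, onBoundary N q → sepDensity N R σ q ≤ k}

lemma sepDensity_le_n {n N : ℕ} (R : Fin n → ℕ × ℕ) (σ : Fin n → Dir) (q : ℕ × ℕ) :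
    sepDensity N R σ q ≤ n := by
  have h := Set.ncard_le_ncard (Set.subset_univ {i | q ∈ sepPath N (R i) (σ i)})
    Set.finite_univ
  rw [Set.ncard_univ] at h
  simpa [sepDensity] using h

lemma density_le_four_boundary {n N : ℕ} (R : Fin n → ℕ × ℕ) (hR : ∀ i, inGrid N (R i))
    (σ : Fin n → Dir) (q : ℕ × ℕ) :
    sepDensity N R σ q ≤ sepDensity N R σ (1, q.2) + sepDensity N R σ (N, q.2)
      + sepDensity N R σ (q.1, 1) + sepDensity N R σ (q.1, N) := by
  set A := {i | (1, q.2) ∈ sepPath N (R i) (σ i)}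
  set B := {i | (N, q.2) ∈ sepPath N (R i) (σ i)}
  set C := {i | (q.1, 1) ∈ sepPath N (R i) (σ i)}
  set D := {i | (q.1, N) ∈ sepPath N (R i) (σ i)}
  have hsub : {i | q ∈ sepPath N (R i) (σ i)} ⊆ A ∪ B ∪ C ∪ D := by
    intro i hi
    obtain ⟨h1, h2, h3, h4⟩ := hR i
    simp only [Set.mem_union, A, B, C, D, Set.mem_setOf_eq] at hi ⊢
    cases h : σ i with
    | left =>
      rw [h] at hi; simp only [sepPath, Set.mem_setOf_eq] at hi ⊢
      exact Or.inl (Or.inl (Or.inl ⟨hi.1, le_refl 1, h1⟩))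
    | right =>
      rw [h] at hi; simp only [sepPath, Set.mem_setOf_eq] at hi ⊢
      exact Or.inl (Or.inl (Or.inr ⟨hi.1, h2, le_refl N⟩))
    | down =>
      rw [h] at hi; simp only [sepPath, Set.mem_setOf_eq] at hi ⊢
      exact Or.inl (Or.inr ⟨hi.1, le_refl 1, h3⟩)
    | up =>
      rw [h] at hi; simp only [sepPath, Set.mem_setOf_eq] at hi ⊢
      exact Or.inr ⟨hi.1, h4, le_refl N⟩
  calc sepDensity N R σ q ≤ (A ∪ B ∪ C ∪ D).ncard :=
        Set.ncard_le_ncard hsub (Set.toFinite _)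
    _ ≤ (A ∪ B ∪ C).ncard + D.ncard := Set.ncard_union_le _ _
    _ ≤ ((A ∪ B).ncard + C.ncard) + D.ncard := by
        exact Nat.add_le_add_right (Set.ncard_union_le _ _) _
    _ ≤ ((A.ncard + B.ncard) + C.ncard) + D.ncard := by
        exact Nat.add_le_add_right (Nat.add_le_add_right (Set.ncard_union_le _ _) _) _
    _ = sepDensity N R σ (1, q.2) + sepDensity N R σ (N, q.2)
      + sepDensity N R σ (q.1, 1) + sepDensity N R σ (q.1, N) := rfl

/-- For any SEP instance with minimum density `k` and minimum boundary
density `k_B`: `k/4 ≤ k_B ≤ k`, hence `k ≤ 4·k_B`. -/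
theorem sep_four_approx {n N : ℕ} (hN : 2 ≤ N)
    (R : Fin n → ℕ × ℕ) (hR : ∀ i, inGrid N (R i))
    (k kB : ℕ) (hk : k = sepOpt N R) (hkB : kB = sepOptB N R) :
    (k : ℝ) / 4 ≤ kB ∧ kB ≤ k ∧ k ≤ 4 * kB := by
  have hne : {m | ∃ σ : Fin n → Dir, ∀ q, inGrid N q → sepDensity N R σ q ≤ m}.Nonempty :=
    ⟨n, fun _ => Dir.left, fun q _ => sepDensity_le_n R _ q⟩
  have hneB : {m | ∃ σ : Fin n → Dir, ∀ q, onBoundary N q → sepDensity N R σ q ≤ m}.Nonempty :=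
    ⟨n, fun _ => Dir.left, fun q _ => sepDensity_le_n R _ q⟩
  -- kB ≤ k
  have hkmem := Nat.sInf_mem hne
  obtain ⟨σ₁, hσ₁⟩ := hkmem
  have hBk : kB ≤ k := by
    rw [hkB, hk]
    exact Nat.sInf_le ⟨σ₁, fun q hq => hσ₁ q hq.1⟩
  -- k ≤ 4 kB
  have hkBmem := Nat.sInf_mem hneB
  obtain ⟨σ₂, hσ₂⟩ := hkBmem
  have hk4 : k ≤ 4 * kB := by
    rw [hk]
    apply Nat.sInf_le
    refine ⟨σ₂, fun q hq => ?_⟩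
    obtain ⟨h1, h2, h3, h4⟩ := hq
    have hN1 : 1 ≤ N := le_trans (by norm_num) hN
    have b1 : sepDensity N R σ₂ (1, q.2) ≤ kB := by
      rw [hkB]; exact hσ₂ _ ⟨⟨le_refl 1, hN1, h3, h4⟩, Or.inl rfl⟩
    have b2 : sepDensity N R σ₂ (N, q.2) ≤ kB := by
      rw [hkB]; exact hσ₂ _ ⟨⟨hN1, le_refl N, h3, h4⟩, Or.inr (Or.inl rfl)⟩
    have b3 : sepDensity N R σ₂ (q.1, 1) ≤ kB := by
      rw [hkB]; exact hσ₂ _ ⟨⟨h1, h2, le_refl 1, hN1⟩, Or.inr (Or.inr (Or.inl rfl))⟩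
    have b4 : sepDensity N R σ₂ (q.1, N) ≤ kB := by
      rw [hkB]; exact hσ₂ _ ⟨⟨h1, h2, hN1, le_refl N⟩, Or.inr (Or.inr (Or.inr rfl))⟩
    have := density_le_four_boundary R hR σ₂ q
    omega
  refine ⟨?_, hBk, hk4⟩
  have : (k : ℝ) ≤ 4 * kB := by exact_mod_cast hk4
  linarith
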